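/- Let (V, q) be a nondegenerate quadratic space of dimension d ≥ 3 over a field of characteristic zero, and let v, w ∈ V be nonzero vectors. If every skew-adjoint endomorphism A ∈ so(V,q) with A(v) = 0 also satisfies A(w) = 0, then w is a scalar multiple of v. -/

import Mathlib

/-- In a nondegenerate quadratic space of dimension `d ≥ 3` over a field of characteristic
zero, if every skew-adjoint endomorphism annihilating a nonzero vector `v` also annihilates
the nonzero vector `w`, then `w` is a scalar multiple of `v`. -/
theorem stmt_5 {k V : Type*} [Field k] [CharZero k]
    [AddCommGroup V] [Module k V] [FiniteDimensional k V]
    (B : LinearMap.BilinForm k V) (hB : B.Nondegenerate) (hsymm : ∀ x y, B x y = B y x)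
    (hd : 3 ≤ Module.finrank k V)
    (v w : V) (hv : v ≠ 0) (hw : w ≠ 0)
    (hann : ∀ A : Module.End k V, A ∈ skewAdjointLieSubalgebra B → A v = 0 → A w = 0) :
    ∃ c : k, w = c • v := by
  classical
  have hBv : B v ≠ 0 := by
    intro h
    exact hv (hB.1 v (fun y => by rw [h]; rfl))
  -- key: for a, b ⊥ v, B w a • b = B w b • a
  have key : ∀ a b : V, B v a = 0 → B v b = 0 → B w a • b = B w b • a := by
    intro a b ha hb
    set T : Module.End k V := ((B a).smulRight b) - ((B b).smulRight a) with hT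
    have hskew : T ∈ skewAdjointLieSubalgebra B := by
      have hsk : LinearMap.IsSkewAdjoint B T := by
        intro x y
        simp only [hT, LinearMap.sub_apply, LinearMap.smulRight_apply,
          LinearMap.neg_apply, map_sub, map_smul, LinearMap.sub_apply, LinearMap.smul_apply,
          smul_eq_mul, map_neg, Pi.neg_apply]
        rw [hsymm b y, hsymm a y, hsymm b x, hsymm a x]
        ring
      exact (LinearMap.mem_skewAdjointSubmodule (B := B) T).mpr hsk
    have hv0 : T v = 0 := by
      have ha' : B a v = 0 := by rw [hsymm]; exact ha
      have hb' : B b v = 0 := by rw [hsymm]; exact hb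
      simp [hT, ha', hb']
    have := hann T hskew hv0
    have : B w a • b - B w b • a = 0 := by
      have hwa' : B a w = B w a := hsymm a w
      have hwb' : B b w = B w b := hsymm b w
      simpa [hT, hwa', hwb'] using this
    linear_combination (norm := module) this
  by_cases hcase : ∀ a : V, B v a = 0 → B w a = 0
  · -- w is proportional to v
    obtain ⟨u, hu⟩ : ∃ u, B v u ≠ 0 := by
      by_contra h
      push_neg at h
      exact hBv (LinearMap.ext h)
    refine ⟨B w u / B v u, ?_⟩
    have : ∀ x, B (w - (B w u / B v u) • v) x = 0 := by
      intro x
      have hx' : B v (x - (B v x / B v u) • u) = 0 := by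
        simp only [map_sub, map_smul, smul_eq_mul]
        field_simp
        ring
      have hwx' : B w (x - (B v x / B v u) • u) = 0 := hcase _ hx'
      simp only [map_sub, map_smul, smul_eq_mul, LinearMap.sub_apply, LinearMap.smul_apply] at hwx' ⊢
      field_simp at hwx' ⊢
      linear_combination hwx'
    have := hB.1 _ this
    linear_combination (norm := module) this
  · exfalso
    push_neg at hcase
    obtain ⟨a, ha, hwa⟩ := hcase
    -- ker (B v) ≤ span {a}
    have hker : LinearMap.ker (B v) ≤ Submodule.span k {a} := by
      intro b hb
      have := key a b ha hb
      have hba : b = (B w b / B w a) • a := by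
        have h2 := congrArg (fun z => (B w a)⁻¹ • z) this
        simpa [smul_smul, inv_mul_cancel₀ hwa, div_eq_inv_mul] using h2
      rw [hba]
      exact Submodule.smul_mem _ _ (Submodule.mem_span_singleton_self a)
    have h1 : Module.finrank k ↥(Submodule.span k {a}) ≤ 1 := by
      simpa using finrank_span_le_card (R := k) ({a} : Set V)
    have h2 : Module.finrank k ↥(LinearMap.ker (B v)) ≤ 1 :=
      le_trans (Submodule.finrank_mono hker) h1
    have h3 := LinearMap.finrank_range_add_finrank_ker (B v)
    have h4 : Module.finrank k ↥(LinearMap.range (B v)) ≤ 1 := by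
      have h := Submodule.finrank_le (LinearMap.range (B v))
      rwa [Module.finrank_self] at h
    omega
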